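/- Let G be a finite connected weighted graph. The integration pairing between harmonic 1-forms and 1-chains, defined by ∫_{e'} de = ℓ(e) if e = e' and 0 otherwise (extended bilinearly), has trivial left kernel on Ω(G), and its right kernel on C_1(G,ℝ) equals im(d). In particular, restricted to Ω(G) × H_1(G,ℝ) it is a perfect pairing, giving an isomorphism H_1(G,ℝ) ≅ Ω(G)*. -/

import Mathlib

/-- A finite weighted (multi)graph with a fixed orientation of the edges:
vertex type `V`, edge type `E`, tail/head maps and a positive length function. -/
structure WGraph where
  V : Type
  E : Type
  [fV : Fintype V]
  [fE : Fintype E]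
  [dV : DecidableEq V]
  [dE : DecidableEq E]
  tail : E → V
  head : E → V
  len : E → ℝ
  len_pos : ∀ e, 0 < len e

attribute [instance] WGraph.fV WGraph.fE WGraph.dV WGraph.dE

namespace WGraph

variable (G : WGraph)

/-- Two vertices are adjacent if some edge joins them (in either direction). -/
def Adj (x y : G.V) : Prop :=
  ∃ e, (G.tail e = x ∧ G.head e = y) ∨ (G.tail e = y ∧ G.head e = x)

/-- A weighted graph is connected if any two vertices are joined by a walk. -/
def Connected : Prop := ∀ x y : G.V, Relation.ReflTransGen G.Adj x y

/-- The differential `d : C_0(G,ℝ) → C_1(G,ℝ)`, `(df)(e) = (f(e⁺) - f(e⁻))/ℓ(e)`. -/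
noncomputable def d (f : G.V → ℝ) : G.E → ℝ :=
  fun e => (f (G.head e) - f (G.tail e)) / G.len e

/-- The adjoint `d* : C_1(G,ℝ) → C_0(G,ℝ)`,
`(d*α)(x) = Σ_{e⁺ = x} α(e) - Σ_{e⁻ = x} α(e)`. -/
def dStar (α : G.E → ℝ) : G.V → ℝ := fun x =>
  (∑ e ∈ Finset.univ.filter fun e => G.head e = x, α e) -
    ∑ e ∈ Finset.univ.filter fun e => G.tail e = x, α e

/-- The inner product `⟨α,β⟩ = Σ_e α(e) β(e) ℓ(e)` on real 1-chains. -/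
noncomputable def ip (α β : G.E → ℝ) : ℝ := ∑ e, α e * β e * G.len e

/-- Real 1-cycles: the kernel of `d*`. -/
def IsCycle (α : G.E → ℝ) : Prop := ∀ x, G.dStar α x = 0

/-- Exact 1-chains: the image of `d`. -/
def IsExact (α : G.E → ℝ) : Prop := ∃ f : G.V → ℝ, α = G.d f

/-- A 1-form `ω = Σ ω_e de` (recorded by its coefficients) is harmonic if at every
vertex the incoming and outgoing coefficients sum to the same value. -/
def Harmonic (ω : G.E → ℝ) : Prop :=
  ∀ x, (∑ e ∈ Finset.univ.filter fun e => G.head e = x, ω e) =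
    ∑ e ∈ Finset.univ.filter fun e => G.tail e = x, ω e

/-- Integration of the 1-form `ω` along the 1-chain `α`: `∫_α ω = Σ_e ω_e α(e) ℓ(e)`. -/
noncomputable def intPair (ω α : G.E → ℝ) : ℝ := ∑ e, ω e * α e * G.len e

/-- `d*` on integral 1-chains. -/
def dStarZ (α : G.E → ℤ) : G.V → ℤ := fun x =>
  (∑ e ∈ Finset.univ.filter fun e => G.head e = x, α e) -
    ∑ e ∈ Finset.univ.filter fun e => G.tail e = x, α e

/-- Integral 1-cycles. -/
def IsCycleZ (α : G.E → ℤ) : Prop := ∀ x, G.dStarZ α x = 0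

/-- `α ∈ im(d)_ℤ`: `α` is an integral 1-chain which is the differential of a real
function on the vertices (a function with integer slopes). -/
def IsExactZ (α : G.E → ℤ) : Prop :=
  ∃ f : G.V → ℝ, ∀ e, (α e : ℝ) = G.d f e

/-- The subgroup `H_1(G,ℤ) ⊕ im(d)_ℤ` of `C_1(G,ℤ)`, i.e. the subgroup generated by
integral cycles together with integral exact chains. -/
def jacRel : AddSubgroup (G.E → ℤ) :=
  AddSubgroup.closure {α | G.IsCycleZ α ∨ G.IsExactZ α}

/-- The Jacobian group of a weighted graph: `J(G) = C_1(G,ℤ)/(H_1(G,ℤ) ⊕ im(d)_ℤ)`. -/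
def Jac := (G.E → ℤ) ⧸ G.jacRel

noncomputable instance : AddCommGroup G.Jac :=
  inferInstanceAs (AddCommGroup ((G.E → ℤ) ⧸ G.jacRel))

/-- Divisors of degree zero. -/
def Div0 : AddSubgroup (G.V → ℤ) where
  carrier := {D | ∑ x, D x = 0}
  add_mem' := by
    intro a b ha hb
    simp only [Set.mem_setOf_eq] at *
    simp [Finset.sum_add_distrib, ha, hb]
  zero_mem' := by simp
  neg_mem' := by
    intro a ha
    simp only [Set.mem_setOf_eq] at *
    simp [ha]

/-- `d*` as a group homomorphism on integral 1-chains. -/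
def dStarZHom : (G.E → ℤ) →+ (G.V → ℤ) where
  toFun := G.dStarZ
  map_zero' := by funext x; simp [dStarZ]
  map_add' := by
    intro a b
    funext x
    simp [dStarZ, Finset.sum_add_distrib]
    ring

/-- The subgroup `im(d)_ℤ` of `C_1(G,ℤ)`. -/
def imdZ : AddSubgroup (G.E → ℤ) where
  carrier := {α | G.IsExactZ α}
  add_mem' := by
    rintro a b ⟨f, hf⟩ ⟨g, hg⟩
    exact ⟨f + g, fun e => by
      simp only [Pi.add_apply, Int.cast_add, hf e, hg e, d]; ring⟩
  zero_mem' := ⟨0, fun e => by simp [d]⟩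
  neg_mem' := by
    rintro a ⟨f, hf⟩
    exact ⟨-f, fun e => by
      simp only [Pi.neg_apply, Int.cast_neg, hf e, d]; ring⟩

/-- Principal divisors: `Prin(G) = d*(im(d)_ℤ)`. -/
def Prin : AddSubgroup (G.V → ℤ) := G.imdZ.map G.dStarZHom

lemma sum_dStarZ (α : G.E → ℤ) : ∑ x, G.dStarZ α x = 0 := by
  simp only [dStarZ, Finset.sum_sub_distrib]
  rw [Finset.sum_fiberwise, Finset.sum_fiberwise]
  simp

/-- The degree-zero Picard group `Pic(G) = Div⁰(G)/Prin(G)`. -/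
def PicZ := G.Div0 ⧸ (G.Prin.addSubgroupOf G.Div0)

noncomputable instance : AddCommGroup G.PicZ :=
  inferInstanceAs (AddCommGroup (G.Div0 ⧸ (G.Prin.addSubgroupOf G.Div0)))

/-- The weighted graph obtained by deleting the edge `e₀`. -/
def delEdge (e₀ : G.E) : WGraph where
  V := G.V
  E := {e : G.E // e ≠ e₀}
  tail := fun e => G.tail e.1
  head := fun e => G.head e.1
  len := fun e => G.len e.1
  len_pos := fun e => G.len_pos e.1

/-- An edge is a bridge if deleting it disconnects the graph. -/
def IsBridge (e₀ : G.E) : Prop := ¬ (G.delEdge e₀).Connected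

/-- The weighted graph obtained by deleting a vertex `z` (and all incident edges). -/
def delVertex (z : G.V) : WGraph where
  V := {x : G.V // x ≠ z}
  E := {e : G.E // G.tail e ≠ z ∧ G.head e ≠ z}
  tail := fun e => ⟨G.tail e.1, e.2.1⟩
  head := fun e => ⟨G.head e.1, e.2.2⟩
  len := fun e => G.len e.1
  len_pos := fun e => G.len_pos e.1

open scoped Classical in
/-- The (discrete) potential kernel: `jKer z y` is the function `f` with `f(z) = 0`
and `Δf = δ_y - δ_z` (when such a function exists; it is unique on a
connected graph). -/
noncomputable def jKer (z y : G.V) : G.V → ℝ :=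
  if h : ∃ f : G.V → ℝ, f z = 0 ∧ ∀ w, G.dStar (G.d f) w =
      (if w = y then 1 else 0) - (if w = z then 1 else 0)
  then h.choose else 0

/-- Connectivity using only the edges in `S`. -/
def ConnectedOn (S : Finset G.E) : Prop :=
  ∀ x y : G.V, Relation.ReflTransGen
    (fun a b => ∃ e ∈ S, (G.tail e = a ∧ G.head e = b) ∨ (G.tail e = b ∧ G.head e = a)) x y

/-- A spanning tree: a spanning connected edge set with `#V - 1` edges. -/
def IsSpanningTree (T : Finset G.E) : Prop :=
  G.ConnectedOn T ∧ T.card + 1 = Fintype.card G.V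

/-- The weight `w(T) = Π_{e ∉ T} ℓ(e)` of a spanning tree. -/
noncomputable def wt (T : Finset G.E) : ℝ := ∏ e ∈ Finset.univ \ T, G.len e

open scoped Classical in
/-- `w(G) = Σ_T w(T)`, summed over all spanning trees. -/
noncomputable def wG : ℝ := ∑ T : Finset G.E, if G.IsSpanningTree T then G.wt T else 0

open scoped Classical in
/-- The Foster coefficient `F(e) = (1/w(G)) Σ_{T : e ∉ T} w(T)`. -/
noncomputable def foster (e : G.E) : ℝ :=
  (1 / G.wG) * ∑ T : Finset G.E, if G.IsSpanningTree T ∧ e ∉ T then G.wt T else 0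

open scoped Classical in
/-- The fundamental cycle `α_{T,e}`: the unique 1-cycle supported on `T ∪ {e}` taking
the value `1` on `e`; by convention it is `0` when no such cycle exists
(e.g. when `e ∈ T`). -/
noncomputable def fundCycle (T : Finset G.E) (e : G.E) : G.E → ℝ :=
  if h : ∃ α : G.E → ℝ, G.IsCycle α ∧ α e = 1 ∧ ∀ f, f ∉ T → f ≠ e → α f = 0
  then h.choose else 0

/-! ### Auxiliary lemmas for the perfect pairing theorem -/

section Aux

variable (G : WGraph)

/-- Summation-by-parts identity. -/
lemma sum_dStar_mul (β g : G.V → ℝ) (α : G.E → ℝ) :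
    ∑ x, G.dStar α x * g x = ∑ e, α e * (g (G.head e) - g (G.tail e)) := by
  simp only [dStar, sub_mul, Finset.sum_sub_distrib, Finset.sum_mul, mul_sub]
  congr 1
  · rw [← Finset.sum_fiberwise Finset.univ G.head (fun e => α e * g (G.head e))]
    refine Finset.sum_congr rfl fun x _ => Finset.sum_congr rfl fun e he => ?_
    simp only [Finset.mem_filter] at he
    rw [he.2]
  · rw [← Finset.sum_fiberwise Finset.univ G.tail (fun e => α e * g (G.tail e))]
    refine Finset.sum_congr rfl fun x _ => Finset.sum_congr rfl fun e he => ?_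
    simp only [Finset.mem_filter] at he
    rw [he.2]

lemma harmonic_iff (ω : G.E → ℝ) : G.Harmonic ω ↔ ∀ x, G.dStar ω x = 0 := by
  constructor
  · intro h x; rw [dStar, sub_eq_zero]; exact h x
  · intro h x; have := h x; rwa [dStar, sub_eq_zero] at this

lemma intPair_d (ω : G.E → ℝ) (f : G.V → ℝ) :
    G.intPair ω (G.d f) = ∑ x, G.dStar ω x * f x := by
  rw [sum_dStar_mul G f f ω]
  refine Finset.sum_congr rfl fun e _ => ?_
  have hl := (G.len_pos e).ne'
  rw [WGraph.d]
  field_simp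

lemma intPair_d_eq_zero {ω : G.E → ℝ} (hω : G.Harmonic ω) (f : G.V → ℝ) :
    G.intPair ω (G.d f) = 0 := by
  rw [intPair_d]
  refine Finset.sum_eq_zero fun x _ => ?_
  rw [(G.harmonic_iff ω).1 hω x, zero_mul]

lemma intPair_self_eq_zero {α : G.E → ℝ} (h : G.intPair α α = 0) : α = 0 := by
  have h2 : ∀ e ∈ Finset.univ, (0:ℝ) ≤ α e * α e * G.len e := fun e _ =>
    mul_nonneg (mul_self_nonneg _) (G.len_pos e).le
  funext e
  have := (Finset.sum_eq_zero_iff_of_nonneg h2).1 h e (Finset.mem_univ e)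
  have hl := (G.len_pos e).ne'
  have : α e * α e = 0 := by
    rcases mul_eq_zero.1 this with h' | h'
    · exact h'
    · exact absurd h' hl
  simpa using mul_self_eq_zero.1 this

lemma dStar_sub (α β : G.E → ℝ) (x : G.V) :
    G.dStar (α - β) x = G.dStar α x - G.dStar β x := by
  simp only [dStar, Pi.sub_apply, Finset.sum_sub_distrib]
  ring

lemma intPair_sub (ω α β : G.E → ℝ) :
    G.intPair ω (α - β) = G.intPair ω α - G.intPair ω β := by
  simp only [intPair, Pi.sub_apply, ← Finset.sum_sub_distrib]
  refine Finset.sum_congr rfl fun e _ => by ring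

lemma sum_dStar (α : G.E → ℝ) : ∑ x, G.dStar α x = 0 := by
  have := G.sum_dStar_mul (fun _ => (1:ℝ)) (fun _ => (1:ℝ)) α
  simpa using this

/-- `d` as a linear map. -/
noncomputable def dLin : (G.V → ℝ) →ₗ[ℝ] (G.E → ℝ) where
  toFun := G.d
  map_add' f g := by funext e; simp only [d, Pi.add_apply]; ring
  map_smul' c f := by
    funext e; simp only [d, Pi.smul_apply, smul_eq_mul, RingHom.id_apply]; ring

/-- `d*` as a linear map. -/
noncomputable def dStarLin : (G.E → ℝ) →ₗ[ℝ] (G.V → ℝ) where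
  toFun := G.dStar
  map_add' f g := by
    funext x
    simp only [dStar, Pi.add_apply, Finset.sum_add_distrib]
    ring
  map_smul' c f := by
    funext x
    simp only [dStar, Pi.smul_apply, smul_eq_mul, RingHom.id_apply, ← Finset.mul_sum]
    ring

/-- The Laplacian `d* ∘ d`. -/
noncomputable def lap : (G.V → ℝ) →ₗ[ℝ] (G.V → ℝ) := G.dStarLin ∘ₗ G.dLin

/-- The sum functional. -/
noncomputable def sumLin : (G.V → ℝ) →ₗ[ℝ] ℝ where
  toFun g := ∑ x, g x
  map_add' f g := by simp [Finset.sum_add_distrib]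
  map_smul' c f := by simp [Finset.mul_sum]

/-- constant functions as a linear map. -/
noncomputable def constLin : ℝ →ₗ[ℝ] (G.V → ℝ) where
  toFun c := fun _ => c
  map_add' f g := rfl
  map_smul' c f := rfl

lemma ker_lap (hG : G.Connected) : LinearMap.ker G.lap = LinearMap.range G.constLin := by
  ext f
  simp only [LinearMap.mem_ker, LinearMap.mem_range]
  constructor
  · intro hf
    -- d f = 0
    have hip : G.intPair (G.d f) (G.d f) = 0 := by
      rw [G.intPair_d]
      refine Finset.sum_eq_zero fun x _ => ?_
      have : G.dStar (G.d f) x = 0 := by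
        have : G.lap f = 0 := hf
        exact congrFun this x
      rw [this, zero_mul]
    have hdf : G.d f = 0 := G.intPair_self_eq_zero hip
    -- f constant along edges
    have hedge : ∀ e, f (G.head e) = f (G.tail e) := by
      intro e
      have := congrFun hdf e
      rw [d] at this
      have hl := (G.len_pos e).ne'
      field_simp at this
      rw [Pi.zero_apply, mul_zero] at this
      linarith
    -- connectivity: f constant
    have hconst : ∀ x y : G.V, f x = f y := by
      intro x y
      induction hG x y with
      | refl => rfl
      | tail _ hadj ih =>
        rcases hadj with ⟨e, ⟨ht, hh⟩ | ⟨ht, hh⟩⟩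
        · rw [ih, ← ht, ← hh, hedge]
        · rw [ih, ← ht, ← hh, ← hedge]
    rcases isEmpty_or_nonempty G.V with hV | hV
    · exact ⟨0, funext fun x => (hV.false x).elim⟩
    · obtain ⟨x₀⟩ := hV
      exact ⟨f x₀, funext fun x => (hconst x₀ x)⟩
  · rintro ⟨c, rfl⟩
    funext x
    have : G.d (G.constLin c) = 0 := by
      funext e; simp [d, constLin]
    show G.dStar (G.d (G.constLin c)) x = 0
    rw [this]
    simp [dStar]

lemma lap_surj_on (hG : G.Connected) [Nonempty G.V] (g : G.V → ℝ) (hg : ∑ x, g x = 0) :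
    ∃ f : G.V → ℝ, G.dStar (G.d f) = g := by
  have hV : 0 < Fintype.card G.V := Fintype.card_pos
  set n := Fintype.card G.V
  have hfin : Module.finrank ℝ (G.V → ℝ) = n := by
    simp [Module.finrank_pi, n]
  -- finrank of ker lap = 1
  have hconst_inj : Function.Injective G.constLin := by
    intro a b hab
    obtain ⟨x₀⟩ := (inferInstance : Nonempty G.V)
    exact congrFun hab x₀
  have hker1 : Module.finrank ℝ (LinearMap.ker G.lap) = 1 := by
    rw [G.ker_lap hG, LinearMap.finrank_range_of_inj hconst_inj, Module.finrank_self]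
  have hrank : Module.finrank ℝ (LinearMap.range G.lap) + 1 = n := by
    have := LinearMap.finrank_range_add_finrank_ker G.lap
    rw [hker1, hfin] at this
    exact this
  -- ker sumLin
  have hsum_surj : Function.Surjective G.sumLin := by
    intro c
    obtain ⟨x₀⟩ := (inferInstance : Nonempty G.V)
    refine ⟨Pi.single x₀ c, ?_⟩
    show ∑ x, Pi.single x₀ c x = c
    simp
  have hkersum : Module.finrank ℝ (LinearMap.ker G.sumLin) + 1 = n := by
    have := LinearMap.finrank_range_add_finrank_ker G.sumLin
    rw [LinearMap.range_eq_top.2 hsum_surj] at this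
    rw [hfin] at this
    simp only [finrank_top, Module.finrank_self] at this
    omega
  have hle : LinearMap.range G.lap ≤ LinearMap.ker G.sumLin := by
    rintro _ ⟨f, rfl⟩
    show G.sumLin (G.lap f) = 0
    exact G.sum_dStar (G.d f)
  have heq : LinearMap.range G.lap = LinearMap.ker G.sumLin := by
    apply Submodule.eq_of_le_of_finrank_eq hle
    omega
  have hgmem : g ∈ LinearMap.ker G.sumLin := hg
  rw [← heq] at hgmem
  obtain ⟨f, hf⟩ := hgmem
  exact ⟨f, hf⟩

/-- Orthogonal decomposition: any 1-chain differs from a cycle by an exact chain. -/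
lemma decompose (hG : G.Connected) (β : G.E → ℝ) :
    ∃ f : G.V → ℝ, G.IsCycle (β - G.d f) := by
  rcases isEmpty_or_nonempty G.V with hV | hV
  · exact ⟨0, fun x => (hV.false x).elim⟩
  · obtain ⟨f, hf⟩ := G.lap_surj_on hG (G.dStar β) (G.sum_dStar β)
    refine ⟨f, fun x => ?_⟩
    rw [G.dStar_sub, hf, sub_self]

end Aux

end WGraph

/-- The integration pairing `∫_α ω = Σ_e ω_e α(e) ℓ(e)` between
harmonic 1-forms and 1-chains has trivial left kernel, right kernel `im(d)`, and
restricted to `Ω(G) × H₁(G,ℝ)` it is a perfect pairing: it is nondegenerate in the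
second variable on cycles, and every linear functional on 1-forms is represented on
`Ω(G)` by integration against some cycle. -/
theorem integration_pairing_perfect (G : WGraph) (hG : G.Connected) :
    (∀ ω : G.E → ℝ, G.Harmonic ω → (∀ α : G.E → ℝ, G.intPair ω α = 0) → ω = 0) ∧
    (∀ α : G.E → ℝ, (∀ ω : G.E → ℝ, G.Harmonic ω → G.intPair ω α = 0) ↔ G.IsExact α) ∧
    (∀ α : G.E → ℝ, G.IsCycle α → (∀ ω : G.E → ℝ, G.Harmonic ω → G.intPair ω α = 0) →
      α = 0) ∧
    (∀ φ : (G.E → ℝ) →ₗ[ℝ] ℝ, ∃ α : G.E → ℝ, G.IsCycle α ∧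
      ∀ ω : G.E → ℝ, G.Harmonic ω → φ ω = G.intPair ω α) := by
  -- the key forward direction of statement 2
  have key : ∀ α : G.E → ℝ, (∀ ω : G.E → ℝ, G.Harmonic ω → G.intPair ω α = 0) →
      G.IsExact α := by
    intro α h
    obtain ⟨f, hf⟩ := G.decompose hG α
    set γ : G.E → ℝ := α - G.d f with hγ
    have hγharm : G.Harmonic γ := (G.harmonic_iff γ).2 hf
    have hγ0 : γ = 0 := by
      apply G.intPair_self_eq_zero
      have h1 : G.intPair γ α = 0 := h γ hγharm
      have h2 : G.intPair γ (G.d f) = 0 := G.intPair_d_eq_zero hγharm f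
      calc G.intPair γ γ = G.intPair γ α - G.intPair γ (G.d f) := G.intPair_sub γ α (G.d f)
        _ = 0 := by rw [h1, h2, sub_zero]
    refine ⟨f, ?_⟩
    have := sub_eq_zero.1 hγ0
    exact this
  refine ⟨?_, ?_, ?_, ?_⟩
  · -- trivial left kernel
    intro ω _ h
    apply G.intPair_self_eq_zero (h ω)
  · -- right kernel = im d
    intro α
    constructor
    · exact key α
    · rintro ⟨f, rfl⟩ ω hω
      exact G.intPair_d_eq_zero hω f
  · -- nondegenerate on cycles
    intro α hα h
    apply G.intPair_self_eq_zero
    exact h α ((G.harmonic_iff α).2 hα)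
  · -- every functional is represented by a cycle
    intro φ
    classical
    set c : G.E → ℝ := fun e => φ (fun j => if e = j then 1 else 0) with hc
    set β : G.E → ℝ := fun e => c e / G.len e with hβ
    have hφ : ∀ ω : G.E → ℝ, φ ω = G.intPair ω β := by
      intro ω
      have hω : ω = ∑ i, ω i • fun j => if i = j then (1:ℝ) else 0 := pi_eq_sum_univ ω
      conv_lhs => rw [hω]
      rw [map_sum]
      simp only [map_smul, smul_eq_mul]
      rw [WGraph.intPair]
      refine Finset.sum_congr rfl fun e _ => ?_
      have hl := (G.len_pos e).ne'
      simp only [hβ, hc]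
      field_simp
    obtain ⟨f, hf⟩ := G.decompose hG β
    refine ⟨β - G.d f, hf, fun ω hω => ?_⟩
    rw [G.intPair_sub, G.intPair_d_eq_zero hω, sub_zero, hφ]
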